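/- arXiv:2412.08091 — 7 statements merged into one kernel-verified Lean document; each statement's English description precedes it below -/
import Mathlib

section
/- Let G = (V, E) be a finite simple graph and let {(a_v, b_v)}_{v ∈ V} be a valid representation of G. Then for every two distinct nodes w ≠ u of G, the nodes w and u are true twins if and only if b_w ⊕ a_w = b_u ⊕ a_u. -/
open scoped Classical

/-- `{(a_v, b_v)}_{v ∈ V}` is a valid representation of the graph `G`:
(1) no nonempty subset of the `a_v`'s sums to zero (linear independence over `𝔽₂`), and
(2) `b_v` is the sum of `a_u` over the neighbors `u` of `v`. -/
def ValidRep {V : Type*} [Fintype V] {ℓ : ℕ} (G : SimpleGraph V)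
    (a b : V → Fin ℓ → ZMod 2) : Prop :=
  (∀ U : Finset V, U.Nonempty → ∑ u ∈ U, a u ≠ 0) ∧
  ∀ v : V, b v = ∑ u ∈ Finset.univ.filter (fun u => G.Adj v u), a u

/-- For a valid representation, distinct nodes `w`, `u` are true twins
(adjacent with `N(w) \ {u} = N(u) \ {w}`) iff `b_w ⊕ a_w = b_u ⊕ a_u`. -/
theorem trueTwins_iff_b_add_a_eq {V : Type*} [Fintype V] {ℓ : ℕ} (G : SimpleGraph V)
    (a b : V → Fin ℓ → ZMod 2) (hvalid : ValidRep G a b)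
    (w u : V) (hwu : w ≠ u) :
    (G.Adj w u ∧ G.neighborSet w \ {u} = G.neighborSet u \ {w}) ↔
      b w + a w = b u + a u := by
  classical
  obtain ⟨hind, hb⟩ := hvalid
  set Nw : Finset V := Finset.univ.filter (fun x => G.Adj w x) with hNw
  set Nu : Finset V := Finset.univ.filter (fun x => G.Adj u x) with hNu
  have hwNw : w ∉ Nw := by simp [hNw]
  have huNu : u ∉ Nu := by simp [hNu]
  set A : Finset V := insert w Nw with hAdef
  set B : Finset V := insert u Nu with hBdef
  have two : ∀ y : Fin ℓ → ZMod 2, y + y = 0 := by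
    intro y; funext i
    show y i + y i = (0 : ZMod 2)
    have : (y i + y i : ZMod 2) = 2 * y i := by ring
    rw [this]
    exact mul_eq_zero_of_left (by decide) _
  have hA : b w + a w = ∑ x ∈ A, a x := by
    rw [hb w, hAdef, Finset.sum_insert hwNw]; ring
  have hB : b u + a u = ∑ x ∈ B, a x := by
    rw [hb u, hBdef, Finset.sum_insert huNu]; ring
  have key : (∑ x ∈ A, a x = ∑ x ∈ B, a x) ↔ A = B := by
    constructor
    · intro h
      by_contra hne
      have hA' := Finset.sum_sdiff (f := a) (Finset.inter_subset_left : A ∩ B ⊆ A)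
      have hB' := Finset.sum_sdiff (f := a) (Finset.inter_subset_right : A ∩ B ⊆ B)
      rw [Finset.sdiff_inter_self_left] at hA'
      rw [Finset.sdiff_inter_self_right] at hB'
      have h1 : ∑ x ∈ A \ B, a x = ∑ x ∈ B \ A, a x := by
        have := hA'.trans (h.trans hB'.symm)
        exact add_right_cancel this
      have hdisj : Disjoint (A \ B) (B \ A) := disjoint_sdiff_sdiff
      have hsum : ∑ x ∈ (A \ B) ∪ (B \ A), a x = 0 := by
        rw [Finset.sum_union hdisj, h1]
        exact two _
      have hne' : ((A \ B) ∪ (B \ A)).Nonempty := by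
        rw [Finset.nonempty_iff_ne_empty]
        intro h0
        apply hne
        rw [Finset.union_eq_empty] at h0
        exact Finset.Subset.antisymm (Finset.sdiff_eq_empty_iff_subset.mp h0.1)
          (Finset.sdiff_eq_empty_iff_subset.mp h0.2)
      exact hind _ hne' hsum
    · intro h; rw [h]
  rw [hA, hB, key]
  constructor
  · rintro ⟨hadj, hset⟩
    have hset' : ∀ x, (G.Adj w x ∧ x ≠ u) ↔ (G.Adj u x ∧ x ≠ w) := by
      intro x
      have := Set.ext_iff.mp hset x
      simpa [SimpleGraph.mem_neighborSet] using this
    ext x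
    simp only [hAdef, hBdef, Finset.mem_insert, hNw, hNu, Finset.mem_filter,
      Finset.mem_univ, true_and]
    constructor
    · rintro (rfl | hx)
      · exact Or.inr hadj.symm
      · by_cases hxu : x = u
        · exact Or.inl hxu
        · exact Or.inr ((hset' x).mp ⟨hx, hxu⟩).1
    · rintro (rfl | hx)
      · exact Or.inr hadj
      · by_cases hxw : x = w
        · exact Or.inl hxw
        · exact Or.inr ((hset' x).mpr ⟨hx, hxw⟩).1
  · intro hABeq
    have hu : u ∈ A := by rw [hABeq, hBdef]; exact Finset.mem_insert_self u Nu
    have hadj : G.Adj w u := by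
      rcases Finset.mem_insert.mp hu with h | h
      · exact absurd h.symm hwu
      · simpa [hNw] using h
    refine ⟨hadj, ?_⟩
    ext x
    simp only [Set.mem_diff, SimpleGraph.mem_neighborSet, Set.mem_singleton_iff]
    constructor
    · rintro ⟨hx, hxu⟩
      have hxA : x ∈ A := Finset.mem_insert_of_mem (by simp [hNw, hx])
      rw [hABeq] at hxA
      rcases Finset.mem_insert.mp hxA with h | h
      · exact absurd h hxu
      · exact ⟨by simpa [hNu] using h, hx.ne'⟩
    · rintro ⟨hx, hxw⟩
      have hxB : x ∈ B := Finset.mem_insert_of_mem (by simp [hNu, hx])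
      rw [← hABeq] at hxB
      rcases Finset.mem_insert.mp hxB with h | h
      · exact absurd h hxw
      · exact ⟨by simpa [hNw] using h, hx.ne'⟩
end

section
/- Let G = (V, E) be a finite simple graph, let {(a_v, b_v)}_{v ∈ V} be a valid representation of G, and let w ≠ u be nodes such that w is pendant and u is its only neighbor. Define, for all v ∈ V \ {w}: a'_v = a_v, and b'_v = b_v if v ≠ u and b'_u = b_u ⊕ a_w. Then {(a'_v, b'_v)}_{v ∈ V \ {w}} is a valid representation of the induced subgraph G − w. -/
open scoped Classical

/-- If `w` is a pendant node with only neighbor `u`, then updating a valid representation by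
keeping all `a_v`, keeping `b_v` for `v ≠ u`, and replacing `b_u` by `b_u ⊕ a_w`
yields a valid representation of the induced subgraph `G - w`. -/
theorem validRep_update_pendant {V : Type*} [Fintype V] {ℓ : ℕ} (G : SimpleGraph V)
    (a b : V → Fin ℓ → ZMod 2) (hvalid : ValidRep G a b)
    (w u : V) (hwu : w ≠ u) (hpend : G.neighborSet w = {u}) :
    ValidRep (G.induce {v : V | v ≠ w})
      (fun v => a v.1)
      (fun v => if v.1 = u then b v.1 + a w else b v.1) := by
  obtain ⟨hind, hb⟩ := hvalid
  have hadj_wu : G.Adj w u := by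
    have : u ∈ G.neighborSet w := by rw [hpend]; rfl
    exact this
  constructor
  · intro U hU h
    apply hind (U.image Subtype.val) (hU.image _)
    rwa [Finset.sum_image (fun x _ y _ hxy => Subtype.val_injective hxy)]
  · intro v
    have hvw : (v : V) ≠ w := v.2
    have key : ∑ x ∈ Finset.univ.filter
          (fun x : {v : V | v ≠ w} => (G.induce {v : V | v ≠ w}).Adj v x),
          a x.1
        = ∑ x ∈ Finset.univ.filter (fun x : V => G.Adj v.1 x ∧ x ≠ w), a x := by
      have himg : Finset.univ.filter (fun x : V => G.Adj v.1 x ∧ x ≠ w)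
          = (Finset.univ.filter
              (fun x : {v : V | v ≠ w} => (G.induce {v : V | v ≠ w}).Adj v x)).image
              Subtype.val := by
        ext x
        simp only [Finset.mem_image, Finset.mem_filter, Finset.mem_univ, true_and]
        constructor
        · rintro ⟨hadj, hxw⟩
          exact ⟨⟨x, hxw⟩, hadj, rfl⟩
        · rintro ⟨y, hy, rfl⟩
          exact ⟨hy, y.2⟩
      rw [himg, Finset.sum_image (fun x _ y _ hxy => Subtype.val_injective hxy)]
    refine Eq.trans ?_ key.symm
    by_cases hvu : (v : V) = u
    · simp only [hvu, if_pos rfl]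
      have hwadj : w ∈ Finset.univ.filter (fun x : V => G.Adj u x) := by
        simp [hadj_wu.symm]
      have hsplit : ∑ x ∈ Finset.univ.filter (fun x : V => G.Adj u x), a x
          = a w + ∑ x ∈ (Finset.univ.filter (fun x : V => G.Adj u x)).erase w, a x :=
        (Finset.add_sum_erase _ _ hwadj).symm
      have herase : (Finset.univ.filter (fun x : V => G.Adj u x)).erase w
          = Finset.univ.filter (fun x : V => G.Adj u x ∧ x ≠ w) := by
        ext x
        simp only [Finset.mem_erase, Finset.mem_filter, Finset.mem_univ, true_and]
        tauto
      have h2 : a w + a w = 0 := by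
        ext i
        show a w i + a w i = 0
        have h20 : (2 : ZMod 2) = 0 := by decide
        have : a w i + a w i = 2 * a w i := by ring
        rw [this, h20, zero_mul]
      rw [hb u, hsplit, herase, if_pos trivial, add_right_comm, h2, zero_add]
    · simp only [if_neg hvu]
      rw [hb v.1]
      congr 1
      ext x
      simp only [Finset.mem_filter, Finset.mem_univ, true_and]
      constructor
      · intro hadj
        refine ⟨hadj, ?_⟩
        rintro rfl
        exact hvu (by have := hadj.symm; rwa [← SimpleGraph.mem_neighborSet, hpend] at this)
      · tauto
end

section
/- Let G = (V, E) be a finite simple graph, let {(a_v, b_v)}_{v ∈ V} be a valid representation of G, and let w ≠ u be nodes that are false twins. Define, for all v ∈ V \ {w}: a'_v = a_v if v ≠ u and a'_u = a_u ⊕ a_w, and b'_v = b_v for all v. Then {(a'_v, b'_v)}_{v ∈ V \ {w}} is a valid representation of the induced subgraph G − w. -/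
open scoped Classical

/-- If `w` and `u` are false twins (non-adjacent with equal neighborhoods), then updating a
valid representation by replacing `a_u` by `a_u ⊕ a_w` (keeping all other `a_v` and all `b_v`)
yields a valid representation of the induced subgraph `G - w`. -/
theorem validRep_update_falseTwins {V : Type*} [Fintype V] {ℓ : ℕ} (G : SimpleGraph V)
    (a b : V → Fin ℓ → ZMod 2) (hvalid : ValidRep G a b)
    (w u : V) (hwu : w ≠ u)
    (hft : ¬ G.Adj w u ∧ G.neighborSet w = G.neighborSet u) :
    ValidRep (G.induce {v : V | v ≠ w})
      (fun v => if v.1 = u then a v.1 + a w else a v.1)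
      (fun v => b v.1) := by
  obtain ⟨h1, h2⟩ := hvalid
  obtain ⟨hnadj, hN⟩ := hft
  have huw : u ≠ w := Ne.symm hwu
  constructor
  · intro U hU hsum
    set uu : {v : V | v ≠ w} := ⟨u, huw⟩ with huudef
    have hrw : ∀ x ∈ U, (if x.1 = u then a x.1 + a w else a x.1)
        = a x.1 + (if x = uu then a w else 0) := by
      intro x _
      by_cases hx : x = uu
      · simp [hx, huudef]
      · have hx1 : x.1 ≠ u := fun h => hx (Subtype.ext h)
        simp [hx1, hx]
    rw [Finset.sum_congr rfl hrw, Finset.sum_add_distrib,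
      Finset.sum_ite_eq' U uu (fun _ => a w)] at hsum
    have himg : ∑ x ∈ U, a x.1 = ∑ x ∈ U.image Subtype.val, a x := by
      rw [Finset.sum_image (by intro x _ y _ h; exact Subtype.ext h)]
    by_cases hmem : uu ∈ U
    · rw [if_pos hmem, himg] at hsum
      have hwni : w ∉ U.image Subtype.val := by
        simp only [Finset.mem_image]
        rintro ⟨x, _, hx⟩
        exact x.2 hx
      have hz : ∑ x ∈ insert w (U.image Subtype.val), a x = 0 := by
        rw [Finset.sum_insert hwni, add_comm]
        exact hsum
      exact h1 _ ⟨w, Finset.mem_insert_self _ _⟩ hz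
    · rw [if_neg hmem, add_zero, himg] at hsum
      obtain ⟨x, hx⟩ := hU
      exact h1 _ ⟨x.1, Finset.mem_image_of_mem _ hx⟩ hsum
  · rintro ⟨v, hv⟩
    simp only []
    rw [h2 v]
    have hsub : ∑ x ∈ Finset.univ.filter
          (fun x : {v : V | v ≠ w} => (G.induce {v : V | v ≠ w}).Adj ⟨v, hv⟩ x),
          (if x.1 = u then a x.1 + a w else a x.1)
        = ∑ x ∈ Finset.univ.filter (fun x : V => x ≠ w ∧ G.Adj v x),
          (if x = u then a x + a w else a x) := by
      rw [Finset.sum_filter]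
      simp only [SimpleGraph.comap_adj, Function.Embedding.coe_subtype]
      rw [← Finset.sum_subtype (Finset.univ.filter (fun x : V => x ≠ w))
        (by intro x; simp [Set.mem_setOf_eq])
        (fun x => if G.Adj v x then (if x = u then a x + a w else a x) else 0)]
      rw [← Finset.sum_filter, Finset.filter_filter]
    erw [hsub]
    by_cases hvw : G.Adj v w
    · have hvu : G.Adj v u := by
        have : v ∈ G.neighborSet w := hvw.symm
        rw [hN] at this
        exact this.symm
      set T := Finset.univ.filter (fun x : V => x ≠ w ∧ G.Adj v x) with hT
      have huT : u ∈ T := by simp [hT, huw, hvu]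
      have hrw2 : ∀ x ∈ T, (if x = u then a x + a w else a x)
          = a x + (if x = u then a w else 0) := by
        intro x _; split_ifs <;> simp
      rw [Finset.sum_congr rfl hrw2, Finset.sum_add_distrib,
        Finset.sum_ite_eq' T u (fun _ => a w), if_pos huT]
      have hins : Finset.univ.filter (fun x : V => G.Adj v x) = insert w T := by
        ext x
        simp only [Finset.mem_filter, Finset.mem_univ, true_and, Finset.mem_insert, hT]
        constructor
        · intro hx
          by_cases hxw : x = w
          · exact Or.inl hxw
          · exact Or.inr ⟨hxw, hx⟩
        · rintro (rfl | ⟨_, hx⟩)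
          · exact hvw
          · exact hx
      have hwT : w ∉ T := by simp [hT]
      rw [hins, Finset.sum_insert hwT, add_comm]
    · have hvu : ¬ G.Adj v u := by
        intro h
        have : v ∈ G.neighborSet u := h.symm
        rw [← hN] at this
        exact hvw this.symm
      have hfe : Finset.univ.filter (fun x : V => x ≠ w ∧ G.Adj v x)
          = Finset.univ.filter (fun x : V => G.Adj v x) := by
        ext x
        simp only [Finset.mem_filter, Finset.mem_univ, true_and]
        exact ⟨fun h => h.2, fun h => ⟨fun hw => hvw (hw ▸ h), h⟩⟩
      rw [hfe]
      refine (Finset.sum_congr rfl ?_).symm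
      intro x hx
      have : x ≠ u := by
        rintro rfl
        exact hvu (Finset.mem_filter.mp hx).2
      rw [if_neg this]
end

section
/- Let G = (V, E) be a finite simple graph, let {(a_v, b_v)}_{v ∈ V} be a valid representation of G, and let w ≠ u be nodes that are true twins. Define, for all v ∈ V \ {w}: a'_v = a_v if v ≠ u and a'_u = a_u ⊕ a_w, and b'_v = b_v if v ≠ u and b'_u = b_u ⊕ a_w. Then {(a'_v, b'_v)}_{v ∈ V \ {w}} is a valid representation of the induced subgraph G − w. -/
open scoped Classical

/-- If `w` and `u` are true twins (adjacent with `N(w) \ {u} = N(u) \ {w}`), then updating a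
valid representation by replacing `a_u` by `a_u ⊕ a_w` and `b_u` by `b_u ⊕ a_w`
(keeping all other `a_v`, `b_v`) yields a valid representation of the induced
subgraph `G - w`. -/
theorem validRep_update_trueTwins {V : Type*} [Fintype V] {ℓ : ℕ} (G : SimpleGraph V)
    (a b : V → Fin ℓ → ZMod 2) (hvalid : ValidRep G a b)
    (w u : V) (hwu : w ≠ u)
    (htt : G.Adj w u ∧ G.neighborSet w \ {u} = G.neighborSet u \ {w}) :
    ValidRep (G.induce {v : V | v ≠ w})
      (fun v => if v.1 = u then a v.1 + a w else a v.1)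
      (fun v => if v.1 = u then b v.1 + a w else b v.1) := by
  have haw2 : a w + a w = 0 := by
    funext i; exact CharTwo.add_self_eq_zero _
  -- generic ite-sum splitting
  have key : ∀ T : Finset V, ∑ y ∈ T, (if y = u then a y + a w else a y)
      = ∑ y ∈ T, a y + (if u ∈ T then a w else 0) := by
    intro T
    have : ∀ y ∈ T, (if y = u then a y + a w else a y) = a y + (if y = u then a w else 0) := by
      intro y _; split <;> simp
    rw [Finset.sum_congr rfl this, Finset.sum_add_distrib, Finset.sum_ite_eq' T u (fun _ => a w)]
  constructor
  · intro U hU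
    set S : Finset V := U.image Subtype.val with hS
    have hwS : w ∉ S := by
      simp only [hS, Finset.mem_image]
      rintro ⟨x, -, hx⟩
      exact x.2 hx
    have hsum : ∑ x ∈ U, (if x.1 = u then a x.1 + a w else a x.1)
        = ∑ y ∈ S, (if y = u then a y + a w else a y) := by
      rw [hS, Finset.sum_image (by intro x _ y _ h; exact Subtype.ext h)]
    rw [hsum, key]
    by_cases hu : u ∈ S
    · simp only [hu, if_true]
      have : ∑ y ∈ S, a y + a w = ∑ y ∈ insert w S, a y := by
        rw [Finset.sum_insert hwS]; ring
      rw [this]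
      exact hvalid.1 _ ⟨w, Finset.mem_insert_self _ _⟩
    · simp only [hu, if_false, add_zero]
      exact hvalid.1 _ (hU.image _)
  · intro v
    have hvw : v.1 ≠ w := v.2
    -- convert the subtype sum to a sum over V
    have himg : (Finset.univ.filter (fun x : {v : V | v ≠ w} =>
        (G.induce {v : V | v ≠ w}).Adj v x)).image Subtype.val
        = Finset.univ.filter (fun y : V => G.Adj v.1 y ∧ y ≠ w) := by
      ext y
      simp only [Finset.mem_image, Finset.mem_filter, Finset.mem_univ, true_and,
        SimpleGraph.comap_adj, Function.Embedding.coe_subtype]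
      constructor
      · rintro ⟨x, hx, rfl⟩
        exact ⟨by simpa using hx, x.2⟩
      · rintro ⟨hy, hyw⟩
        exact ⟨⟨y, hyw⟩, by simpa using hy, rfl⟩
    have hsum : ∑ x ∈ Finset.univ.filter (fun x : {v : V | v ≠ w} =>
          (G.induce {v : V | v ≠ w}).Adj v x), (if x.1 = u then a x.1 + a w else a x.1)
        = ∑ y ∈ Finset.univ.filter (fun y : V => G.Adj v.1 y ∧ y ≠ w),
            (if y = u then a y + a w else a y) := by
      rw [← himg, Finset.sum_image (by intro x _ y _ h; exact Subtype.ext h)]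
    show _ = ∑ x ∈ Finset.univ.filter _, _
    erw [hsum, key]
    set T : Finset V := Finset.univ.filter (fun y : V => G.Adj v.1 y ∧ y ≠ w) with hT
    have hTerase : T = (Finset.univ.filter (fun y : V => G.Adj v.1 y)).erase w := by
      ext y; simp [hT, Finset.mem_erase, and_comm]
    by_cases hvu : v.1 = u
    · -- v = u : w is adjacent, u ∉ T
      have hwadj : G.Adj v.1 w := hvu ▸ htt.1.symm
      have huT : u ∉ T := by
        simp only [hT, Finset.mem_filter]
        rintro ⟨-, h, -⟩
        exact G.irrefl (hvu ▸ h)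
      simp only [hvu, if_true, huT, if_false, add_zero]
      have hb := hvalid.2 v.1
      have hwmem : w ∈ Finset.univ.filter (fun y : V => G.Adj v.1 y) := by
        simp only [Finset.mem_filter, Finset.mem_univ, true_and]
        exact hwadj
      have hb2 : b v.1 = ∑ y ∈ ((Finset.univ.filter (fun y : V => G.Adj v.1 y)).erase w), a y + a w := by
        rw [hb, ← Finset.add_sum_erase _ _ hwmem]; ring
      rw [← hvu, hb2, hTerase, add_assoc, haw2, add_zero]
    · -- v ≠ u, v ≠ w : twin property
      have htwin : G.Adj v.1 u ↔ G.Adj v.1 w := by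
        have h2 := Set.ext_iff.mp htt.2 v.1
        simp only [Set.mem_diff, SimpleGraph.mem_neighborSet, Set.mem_singleton_iff] at h2
        constructor
        · intro h
          exact ((h2.mpr ⟨h.symm, hvw⟩).1).symm
        · intro h
          exact ((h2.mp ⟨h.symm, fun e => hvu e⟩).1).symm
      simp only [hvu, if_false]
      rw [hvalid.2 v.1]
      by_cases hadj : G.Adj v.1 u
      · have hwadj : G.Adj v.1 w := htwin.mp hadj
        have huw : u ≠ w := fun e => hwu e.symm
        have huT : u ∈ T := by
          simp [hT, hadj, huw]
        simp only [huT, if_true]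
        have hwmem : w ∈ Finset.univ.filter (fun y : V => G.Adj v.1 y) := by
          simp [hwadj]
        rw [hTerase, ← Finset.add_sum_erase _ _ hwmem]
        ring
      · have hwadj : ¬ G.Adj v.1 w := fun h => hadj (htwin.mpr h)
        have huT : u ∉ T := by simp [hT, hadj]
        simp only [huT, if_false, add_zero]
        congr 1
        ext y
        simp only [hT, Finset.mem_filter, Finset.mem_univ, true_and]
        exact ⟨fun hy => ⟨hy, by rintro rfl; exact hwadj hy⟩, fun h => h.1⟩
end

section
/- Let G = (V, E) be a finite simple graph and let d ≥ 0. If a subset S ⊆ V contains two distinct nodes u ≠ v such that Δ(ν_u ⊕ e_u, ν_v ⊕ e_v) > 2d, then S is not a max-d-isolated clique. -/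
open scoped Classical

/-- `nu G v` is the characteristic vector (over `𝔽₂`) of the neighborhood of `v` in `G`. -/
noncomputable def nu {V : Type*} (G : SimpleGraph V) (v : V) : V → ZMod 2 :=
  fun u => if G.Adj v u then 1 else 0

/-- `evec v` is the characteristic vector (over `𝔽₂`) of the singleton `{v}`. -/
noncomputable def evec {V : Type*} (v : V) : V → ZMod 2 :=
  fun u => if u = v then 1 else 0

/-- `S` is a max-`d`-isolated clique: the subgraph induced by `S` is a clique and
every node of `S` has at most `d` neighbors outside `S`. -/
def IsMaxIsolatedClique {V : Type*} [Fintype V] (G : SimpleGraph V) (d : ℕ)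
    (S : Finset V) : Prop :=
  (∀ u ∈ S, ∀ v ∈ S, u ≠ v → G.Adj u v) ∧
  ∀ u ∈ S, (Finset.univ.filter (fun v => v ∉ S ∧ G.Adj u v)).card ≤ d

/-- If `S` contains two distinct nodes `u ≠ v` with
`Δ(ν_u ⊕ e_u, ν_v ⊕ e_v) > 2d`, then `S` is not a max-`d`-isolated clique. -/
theorem not_maxIsolatedClique_of_hammingDist_gt {V : Type*} [Fintype V]
    (G : SimpleGraph V) (d : ℕ) (S : Finset V)
    (u v : V) (hu : u ∈ S) (hv : v ∈ S) (huv : u ≠ v)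
    (hdist : hammingDist (nu G u + evec u) (nu G v + evec v) > 2 * d) :
    ¬ IsMaxIsolatedClique G d S := by

  rintro ⟨hclique, hdeg⟩
  -- on S, both vectors are 1
  have key : ∀ w ∈ S, (nu G u + evec u) w = 1 ∧ (nu G v + evec v) w = 1 := by
    intro w hw
    constructor
    · by_cases h : w = u
      · subst h
        simp [nu, evec, G.irrefl]
      · simp [nu, evec, h, hclique u hu w hw (Ne.symm h)]
    · by_cases h : w = v
      · subst h
        simp [nu, evec, G.irrefl]
      · simp [nu, evec, h, hclique v hv w hw (Ne.symm h)]
  have hsub : (Finset.univ.filter fun w => (nu G u + evec u) w ≠ (nu G v + evec v) w) ⊆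
      (Finset.univ.filter (fun w => w ∉ S ∧ G.Adj u w)) ∪
      (Finset.univ.filter (fun w => w ∉ S ∧ G.Adj v w)) := by
    intro w hw
    simp only [Finset.mem_filter, Finset.mem_univ, true_and] at hw
    by_cases hwS : w ∈ S
    · exact absurd (by rw [(key w hwS).1, (key w hwS).2]) hw
    · have hwu : w ≠ u := fun h => hwS (h ▸ hu)
      have hwv : w ≠ v := fun h => hwS (h ▸ hv)
      simp only [Finset.mem_union, Finset.mem_filter, Finset.mem_univ, true_and]
      by_cases hadj : G.Adj u w
      · exact Or.inl ⟨hwS, hadj⟩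
      · right
        refine ⟨hwS, ?_⟩
        by_contra hadjv
        apply hw
        simp [nu, evec, hwu, hwv, hadj, hadjv]
  have hle : hammingDist (nu G u + evec u) (nu G v + evec v) ≤ 2 * d := by
    calc hammingDist (nu G u + evec u) (nu G v + evec v)
        = (Finset.univ.filter fun w => (nu G u + evec u) w ≠ (nu G v + evec v) w).card := rfl
      _ ≤ ((Finset.univ.filter (fun w => w ∉ S ∧ G.Adj u w)) ∪
            (Finset.univ.filter (fun w => w ∉ S ∧ G.Adj v w))).card := Finset.card_le_card hsub
      _ ≤ (Finset.univ.filter (fun w => w ∉ S ∧ G.Adj u w)).card +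
            (Finset.univ.filter (fun w => w ∉ S ∧ G.Adj v w)).card := Finset.card_union_le _ _
      _ ≤ d + d := Nat.add_le_add (hdeg u hu) (hdeg v hv)
      _ = 2 * d := (two_mul d).symm
  omega
end

section
/- Let G = (V, E) be a finite simple graph. Then every connected component of G induces a clique if and only if for every node v ∈ V, the number of nodes u ∈ V satisfying ν_u ⊕ e_u = ν_v ⊕ e_v equals deg(v) + 1. -/
open scoped Classical

/-- `deg G v` is the degree of node `v` in `G`, i.e., the number of its neighbors. -/
noncomputable def deg {V : Type*} [Fintype V] (G : SimpleGraph V) (v : V) : ℕ :=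
  (Finset.univ.filter (fun u => G.Adj v u)).card

lemma closed_val {V : Type*} (G : SimpleGraph V) (u w : V) :
    (nu G u + evec u) w = if (G.Adj u w ∨ w = u) then 1 else 0 := by
  show nu G u w + evec u w = _
  unfold nu evec
  by_cases h2 : w = u
  · subst h2; simp [G.irrefl]
  · by_cases h1 : G.Adj u w
    all_goals simp [h1, h2]

lemma closed_eq_iff {V : Type*} (G : SimpleGraph V) (u v : V) :
    nu G u + evec u = nu G v + evec v ↔
      ∀ w, (G.Adj u w ∨ w = u) ↔ (G.Adj v w ∨ w = v) := by
  rw [funext_iff]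
  apply forall_congr'
  intro w
  rw [closed_val, closed_val]
  by_cases h1 : G.Adj u w ∨ w = u <;> by_cases h2 : G.Adj v w ∨ w = v <;>
    simp [h1, h2]

/-- Every connected component of `G` induces a clique if and only if for every node `v`,
the number of nodes `u` with `ν_u ⊕ e_u = ν_v ⊕ e_v` equals `deg(v) + 1`. -/
theorem cliques_iff_closedNbhd_count {V : Type*} [Fintype V] (G : SimpleGraph V) :
    (∀ u v : V, u ≠ v → G.Reachable u v → G.Adj u v) ↔
      ∀ v : V,
        (Finset.univ.filter (fun u => nu G u + evec u = nu G v + evec v)).card =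
          deg G v + 1 := by
  constructor
  · intro h v
    have key : ∀ u, (nu G u + evec u = nu G v + evec v) ↔ (u = v ∨ G.Adj v u) := by
      intro u
      rw [closed_eq_iff]
      constructor
      · intro hw
        have := (hw u).mp (Or.inr rfl)
        rcases this with h1 | h1
        · exact Or.inr h1
        · exact Or.inl h1
      · rintro (rfl | hadj)
        · intro w; rfl
        · intro w
          constructor
          · rintro (h1 | rfl)
            · by_cases hwv : w = v
              · exact Or.inr hwv
              · exact Or.inl (h v w (Ne.symm hwv)
                  (hadj.reachable.trans h1.reachable))
            · exact Or.inl hadj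
          · rintro (h1 | rfl)
            · by_cases hwu : w = u
              · exact Or.inr hwu
              · exact Or.inl (h u w (Ne.symm hwu)
                  (hadj.symm.reachable.trans h1.reachable))
            · exact Or.inl hadj.symm
    have : (Finset.univ.filter (fun u => nu G u + evec u = nu G v + evec v)) =
        insert v (Finset.univ.filter (fun u => G.Adj v u)) := by
      ext u
      simp only [Finset.mem_filter, Finset.mem_univ, true_and, Finset.mem_insert]
      rw [key u]
    rw [this, Finset.card_insert_of_notMem (by simp [G.irrefl]), deg]
  · intro h
    -- every neighbor has the same closed neighborhood vector
    have hnb : ∀ v u : V, G.Adj v u → nu G u + evec u = nu G v + evec v := by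
      intro v u hadj
      have hsub : (Finset.univ.filter (fun u => nu G u + evec u = nu G v + evec v)) ⊆
          insert v (Finset.univ.filter (fun u => G.Adj v u)) := by
        intro x hx
        simp only [Finset.mem_filter, Finset.mem_univ, true_and] at hx
        have := ((closed_eq_iff G x v).mp hx x).mp (Or.inr rfl)
        simp only [Finset.mem_insert, Finset.mem_filter, Finset.mem_univ, true_and]
        rcases this with h1 | h1
        · exact Or.inr h1
        · exact Or.inl h1
      have hcard : (insert v (Finset.univ.filter (fun u => G.Adj v u))).card ≤
          (Finset.univ.filter (fun u => nu G u + evec u = nu G v + evec v)).card := by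
        rw [h v, Finset.card_insert_of_notMem (by simp [G.irrefl])]
        rfl
      have heq := Finset.eq_of_subset_of_card_le hsub hcard
      have : u ∈ (Finset.univ.filter (fun u => nu G u + evec u = nu G v + evec v)) := by
        rw [heq]
        simp [hadj]
      simpa using this
    have htrans : ∀ a b c : V, G.Adj a b → G.Adj b c → a ≠ c → G.Adj a c := by
      intro a b c hab hbc hac
      have := ((closed_eq_iff G b a).mp (hnb a b hab) c).mp (Or.inl hbc)
      rcases this with h1 | h1
      · exact h1
      · exact absurd h1.symm hac
    intro u v hne hr
    obtain ⟨p⟩ := hr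
    induction p with
    | nil => exact absurd rfl hne
    | @cons a x b hax p ih =>
      by_cases hxb : x = b
      · subst hxb; exact hax
      · exact htrans a x b hax (ih hxb) hne
end

section
/- Let G = (V, E) be a finite simple graph and let d ≥ 0. A subset S ⊆ V is a max-d-isolated clique if and only if both of the following hold: (i) for every two distinct nodes u ≠ v in S, Δ(ν_u, ν_v) = Δ(ν_u ⊕ e_u, ν_v ⊕ e_v) + 2; and (ii) for every node u ∈ S, deg(u) ≤ |S| + d − 1. -/
open scoped Classical

lemma hamming_iff {V : Type*} [Fintype V] (G : SimpleGraph V) {u v : V} (huv : u ≠ v) :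
    (hammingDist (nu G u) (nu G v) =
      hammingDist (nu G u + evec u) (nu G v + evec v) + 2) ↔ G.Adj u v := by
  classical
  set A := Finset.univ.filter (fun i => nu G u i ≠ nu G v i) with hA
  set B := Finset.univ.filter (fun i => (nu G u + evec u) i ≠ (nu G v + evec v) i) with hB
  have hdA : hammingDist (nu G u) (nu G v) = A.card := rfl
  have hdB : hammingDist (nu G u + evec u) (nu G v + evec v) = B.card := rfl
  have key : ∀ i, i ≠ u → i ≠ v → (i ∈ A ↔ i ∈ B) := by
    intro i hiu hiv
    rw [hA, hB, Finset.mem_filter, Finset.mem_filter]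
    simp only [hA, hB, Finset.mem_filter, Finset.mem_univ, true_and, Pi.add_apply,
      evec, if_neg hiu, if_neg hiv, add_zero]
  have hnuu : nu G u u = 0 := by simp [nu]
  have hnvv : nu G v v = 0 := by simp [nu]
  have hsymm : nu G v u = nu G u v := by simp [nu, G.adj_comm]
  by_cases h : G.Adj u v
  · have hnuv : nu G u v = 1 := by simp [nu, h]
    have huA : u ∈ A := by
      simp [hA, hnuu, hsymm, hnuv]
    have hvA : v ∈ A := by
      simp [hA, hnvv, hnuv]
    have huB : u ∉ B := by
      rw [hB, Finset.mem_filter]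
      simp [hB, evec, hnuu, hsymm, hnuv, huv, huv.symm]
    have hvB : v ∉ B := by
      rw [hB, Finset.mem_filter]
      simp [hB, evec, hnvv, hnuv, huv, huv.symm]
    have hAeq : A = insert u (insert v B) := by
      ext i
      by_cases hiu : i = u
      · subst hiu; simp [huA]
      · by_cases hiv : i = v
        · subst hiv; simp [hvA]
        · simp [hiu, hiv, key i hiu hiv]
    have : A.card = B.card + 2 := by
      have hu' : u ∉ insert v B := by simp [huv, huB]
      rw [hAeq, Finset.card_insert_of_notMem hu', Finset.card_insert_of_notMem hvB]
    simp [hdA, hdB, this, h]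
  · have hnuv : nu G u v = 0 := by simp [nu, h]
    have huA : u ∉ A := by simp [hA, hnuu, hsymm, hnuv]
    have hvA : v ∉ A := by simp [hA, hnvv, hnuv]
    have huB : u ∈ B := by rw [hB, Finset.mem_filter]; simp [hB, evec, hnuu, hsymm, hnuv, huv, huv.symm]
    have hvB : v ∈ B := by rw [hB, Finset.mem_filter]; simp [hB, evec, hnvv, hnuv, huv, huv.symm]
    have hBeq : B = insert u (insert v A) := by
      ext i
      by_cases hiu : i = u
      · subst hiu; simp [huB]
      · by_cases hiv : i = v
        · subst hiv; simp [hvB]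
        · simp [hiu, hiv, key i hiu hiv]
    have : B.card = A.card + 2 := by
      have hu' : u ∉ insert v A := by simp [huv, huA]
      rw [hBeq, Finset.card_insert_of_notMem hu', Finset.card_insert_of_notMem hvA]
    simp only [hdA, hdB, this]
    constructor
    · intro hh; omega
    · intro hh; exact absurd hh h

lemma deg_split {V : Type*} [Fintype V] (G : SimpleGraph V) (S : Finset V)
    (hcl : ∀ u ∈ S, ∀ v ∈ S, u ≠ v → G.Adj u v) {u : V} (hu : u ∈ S) :
    deg G u = (S.card - 1) + (Finset.univ.filter (fun v => v ∉ S ∧ G.Adj u v)).card := by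
  classical
  have hsplit : Finset.univ.filter (fun v => G.Adj u v) =
      (Finset.univ.filter (fun v => v ∈ S ∧ G.Adj u v)) ∪
      (Finset.univ.filter (fun v => v ∉ S ∧ G.Adj u v)) := by
    ext w; by_cases hw : w ∈ S <;> simp [hw]
  have hdisj : Disjoint (Finset.univ.filter (fun v => v ∈ S ∧ G.Adj u v))
      (Finset.univ.filter (fun v => v ∉ S ∧ G.Adj u v)) := by
    rw [Finset.disjoint_left]
    intro w hw hw'
    simp only [Finset.mem_filter] at hw hw'
    exact hw'.2.1 hw.2.1
  have hin : Finset.univ.filter (fun v => v ∈ S ∧ G.Adj u v) = S.erase u := by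
    ext w
    simp only [Finset.mem_filter, Finset.mem_univ, true_and, Finset.mem_erase]
    constructor
    · rintro ⟨hwS, hadj⟩; exact ⟨fun h => by subst h; exact G.irrefl hadj, hwS⟩
    · rintro ⟨hne, hwS⟩; exact ⟨hwS, hcl u hu w hwS (Ne.symm hne)⟩
  rw [deg, hsplit, Finset.card_union_of_disjoint hdisj, hin, Finset.card_erase_of_mem hu]


/-- `S` is a max-`d`-isolated clique iff (i) for all distinct `u, v ∈ S`,
`Δ(ν_u, ν_v) = Δ(ν_u ⊕ e_u, ν_v ⊕ e_v) + 2`, and (ii) for all `u ∈ S`,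
`deg(u) ≤ |S| + d - 1`. -/
theorem maxIsolatedClique_iff {V : Type*} [Fintype V] (G : SimpleGraph V) (d : ℕ)
    (S : Finset V) :
    IsMaxIsolatedClique G d S ↔
      ((∀ u ∈ S, ∀ v ∈ S, u ≠ v →
          hammingDist (nu G u) (nu G v) =
            hammingDist (nu G u + evec u) (nu G v + evec v) + 2) ∧
       ∀ u ∈ S, (deg G u : ℤ) ≤ (S.card : ℤ) + (d : ℤ) - 1) := by
  classical
  constructor
  · rintro ⟨hcl, hd⟩
    refine ⟨fun u hu v hv huv => (hamming_iff G huv).mpr (hcl u hu v hv huv), fun u hu => ?_⟩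
    have h1 := deg_split G S hcl hu
    have h2 := hd u hu
    have hc : 1 ≤ S.card := Finset.card_pos.mpr ⟨u, hu⟩
    omega
  · rintro ⟨hham, hd⟩
    have hcl : ∀ u ∈ S, ∀ v ∈ S, u ≠ v → G.Adj u v :=
      fun u hu v hv huv => (hamming_iff G huv).mp (hham u hu v hv huv)
    refine ⟨hcl, fun u hu => ?_⟩
    have h1 := deg_split G S hcl hu
    have h2 := hd u hu
    have hc : 1 ≤ S.card := Finset.card_pos.mpr ⟨u, hu⟩
    omega
end
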